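/- Let θ_1 and θ_2 be distinct real numbers. Then the lattice Λ_{θ1,θ2} satisfies ω(Λ_{θ1,θ2}) = (1/2)·max(μ(θ_1), μ(θ_2)) − 1 (with the convention that the right-hand side is +∞ if either irrationality measure is +∞). -/

import Mathlib

set_option maxHeartbeats 1000000

open scoped BigOperators

noncomputable section

/-- The multiplicative function `Π(x) = ∏ i |x_i|^{1/d}`. -/
def Pibar (d : ℕ) (x : Fin d → ℝ) : ℝ := ∏ i, |x i| ^ (1 / (d : ℝ))

/-- The Diophantine exponent of a lattice `Λ ⊆ ℝ^d` (sup-norm `‖·‖`). -/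
def dioExp (d : ℕ) (Λ : Set (Fin d → ℝ)) : EReal :=
  sSup {g : EReal | ∃ γ : ℝ, g = (γ : EReal) ∧
    {x : Fin d → ℝ | x ∈ Λ ∧ Pibar d x ≤ ‖x‖ ^ (-γ)}.Infinite}

/-- The irrationality measure `μ(θ)`. -/
def irrMeasure (θ : ℝ) : EReal :=
  sSup {g : EReal | ∃ γ : ℝ, g = (γ : EReal) ∧
    {zp : ℤ × ℤ | zp.1 ≠ 0 ∧
      |θ - (zp.2 : ℝ) / (zp.1 : ℝ)| ≤ |(zp.1 : ℝ)| ^ (-γ)}.Infinite}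

/-- The lattice `Λ_{θ₁,θ₂} = {(qθ₁ - p, qθ₂ - p) : (q,p) ∈ ℤ²}`. -/
def latticeTheta (θ₁ θ₂ : ℝ) : Set (Fin 2 → ℝ) :=
  {x | ∃ z : ℤ × ℤ, x = ![(z.1 : ℝ) * θ₁ - (z.2 : ℝ), (z.1 : ℝ) * θ₂ - (z.2 : ℝ)]}

lemma norm_two (x : Fin 2 → ℝ) : ‖x‖ = max |x 0| |x 1| := by
  apply le_antisymm
  · refine (pi_norm_le_iff_of_nonneg (le_trans (abs_nonneg _) (le_max_left _ _))).2 ?_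
    intro i; fin_cases i <;> simp [Real.norm_eq_abs]
  · exact max_le ((Real.norm_eq_abs _) ▸ norm_le_pi_norm x 0)
      ((Real.norm_eq_abs _) ▸ norm_le_pi_norm x 1)

lemma sq_rpow (a : ℝ) (ha : 0 ≤ a) (y : ℝ) : (a ^ y) ^ (2:ℕ) = a ^ (y * 2) := by
  rw [← Real.rpow_natCast (a ^ y) 2, ← Real.rpow_mul ha]; norm_num

lemma Pibar_le_iff (x : Fin 2 → ℝ) (γ : ℝ) :
    Pibar 2 x ≤ ‖x‖ ^ (-γ) ↔ |x 0| * |x 1| ≤ ‖x‖ ^ (-(2*γ)) := by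
  have h1 : Pibar 2 x = |x 0| ^ ((2:ℝ)⁻¹) * |x 1| ^ ((2:ℝ)⁻¹) := by
    simp [Pibar, Fin.prod_univ_two]
  rw [h1, ← pow_le_pow_iff_left₀ (by positivity) (Real.rpow_nonneg (norm_nonneg x) _) two_ne_zero,
    mul_pow, sq_rpow _ (abs_nonneg _), sq_rpow _ (abs_nonneg _), sq_rpow _ (norm_nonneg x),
    show -γ * 2 = -(2*γ) by ring]
  norm_num [Real.rpow_one]

def Fmap (θ₁ θ₂ : ℝ) (z : ℤ × ℤ) : Fin 2 → ℝ :=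
  ![(z.1 : ℝ) * θ₁ - (z.2 : ℝ), (z.1 : ℝ) * θ₂ - (z.2 : ℝ)]

lemma Fmap_zero (θ₁ θ₂ : ℝ) (z : ℤ × ℤ) : Fmap θ₁ θ₂ z 0 = (z.1 : ℝ) * θ₁ - (z.2 : ℝ) := rfl
lemma Fmap_one (θ₁ θ₂ : ℝ) (z : ℤ × ℤ) : Fmap θ₁ θ₂ z 1 = (z.1 : ℝ) * θ₂ - (z.2 : ℝ) := rfl

lemma mem_latticeTheta (θ₁ θ₂ : ℝ) (x : Fin 2 → ℝ) :
    x ∈ latticeTheta θ₁ θ₂ ↔ ∃ z, x = Fmap θ₁ θ₂ z := Iff.rfl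

lemma Fmap_inj (θ₁ θ₂ : ℝ) (h : θ₁ ≠ θ₂) : Function.Injective (Fmap θ₁ θ₂) := by
  rintro ⟨q, p⟩ ⟨q', p'⟩ hz
  have h0 : (q:ℝ) * θ₁ - p = (q':ℝ) * θ₁ - p' := congrFun hz 0
  have h1 : (q:ℝ) * θ₂ - p = (q':ℝ) * θ₂ - p' := congrFun hz 1
  have hq : (q:ℝ) = q' := by
    have := sub_ne_zero.2 h
    have h2 : ((q:ℝ) - q') * (θ₁ - θ₂) = 0 := by linarith [h0, h1]
    rcases mul_eq_zero.1 h2 with h3 | h3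
    · linarith [sub_eq_zero.1 h3]
    · exact absurd h3 this
  have hp : (p:ℝ) = p' := by rw [hq] at h0; linarith
  have : q = q' := by exact_mod_cast hq
  have : p = p' := by exact_mod_cast hp
  simp_all

lemma box_finite (a b : ℝ) : {z : ℤ × ℤ | (|z.1| : ℝ) ≤ a ∧ (|z.2| : ℝ) ≤ b}.Finite := by
  apply Set.Finite.subset (Set.finite_Icc (-⌈a⌉, -⌈b⌉) (⌈a⌉, ⌈b⌉))
  rintro ⟨q, p⟩ ⟨h1, h2⟩
  have hq : |q| ≤ ⌈a⌉ := by exact_mod_cast h1.trans (Int.le_ceil a)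
  have hp : |p| ≤ ⌈b⌉ := by exact_mod_cast h2.trans (Int.le_ceil b)
  simp only [Set.mem_Icc, Prod.le_def]
  exact ⟨⟨(abs_le.1 hq).1, (abs_le.1 hp).1⟩, ⟨(abs_le.1 hq).2, (abs_le.1 hp).2⟩⟩

def Bset (θ γ : ℝ) : Set (ℤ × ℤ) :=
  {zp : ℤ × ℤ | zp.1 ≠ 0 ∧ |θ - (zp.2 : ℝ) / (zp.1 : ℝ)| ≤ |(zp.1 : ℝ)| ^ (-γ)}

lemma one_le_abs_cast {q : ℤ} (hq : q ≠ 0) : (1:ℝ) ≤ |(q:ℝ)| := by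
  rw [← Int.cast_abs]; exact_mod_cast Int.one_le_abs hq

lemma Bset_anti (θ : ℝ) {γ' γ : ℝ} (hγ : γ' ≤ γ) : Bset θ γ ⊆ Bset θ γ' := by
  rintro ⟨q, p⟩ ⟨hq, hle⟩
  exact ⟨hq, hle.trans (Real.rpow_le_rpow_of_exponent_le (one_le_abs_cast hq) (by linarith))⟩

lemma round_mem_Bset (θ : ℝ) (q : ℤ) (hq : 0 < q) : (q, round ((q:ℝ)*θ)) ∈ Bset θ 1 := by
  have hqR : (0:ℝ) < (q:ℝ) := by exact_mod_cast hq
  refine ⟨hq.ne', ?_⟩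
  set p : ℤ := round ((q:ℝ)*θ) with hp
  have h1 : |θ - (p : ℝ) / (q:ℝ)| = |(q:ℝ) * θ - p| / (q:ℝ) := by
    rw [eq_div_iff (ne_of_gt hqR), ← abs_of_pos hqR, ← abs_mul]
    congr 1
    rw [abs_of_pos hqR]
    field_simp
  have h2 : |(q:ℝ) * θ - p| ≤ 1/2 := abs_sub_round _
  rw [h1, abs_of_pos hqR, Real.rpow_neg_one]
  rw [div_le_iff₀ hqR, inv_mul_cancel₀ (ne_of_gt hqR)]
  linarith
  
lemma Bset_one_infinite (θ : ℝ) : (Bset θ 1).Infinite := by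
  apply Set.infinite_of_injective_forall_mem
    (f := fun n : ℕ => (((n:ℤ)+1), round ((((n:ℤ)+1):ℝ) * θ)))
  case hi =>
    intro a b hab
    have : (a:ℤ) + 1 = (b:ℤ) + 1 := congrArg Prod.fst hab
    omega
  case hf =>
    intro n
    have := round_mem_Bset θ ((n:ℤ)+1) (by positivity)
    push_cast at this ⊢
    exact this

lemma lower_main (θ θ' : ℝ) (hne : θ ≠ θ') (γ δ : ℝ) (hγ : 1 ≤ γ) (hδ : 0 < δ)
    (hB : (Bset θ γ).Infinite) :
    {x | x ∈ latticeTheta θ θ' ∧ Pibar 2 x ≤ ‖x‖ ^ (-(γ/2 - 1 - δ))}.Infinite := by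
  set c := |θ' - θ| with hc
  have hc0 : 0 < c := abs_pos.2 (sub_ne_zero.2 hne.symm)
  set e := 2 + 2*δ - γ with he
  set K := (c+1) * ((c/2) ^ (-e) + (c+1) ^ (-e)) with hK
  have hK0 : 0 < K := by positivity
  set Q0 : ℝ := max (max 1 (2/c)) (K ^ (2*δ)⁻¹) with hQ0
  set S := {z : ℤ × ℤ | z ∈ Bset θ γ ∧ Q0 ≤ |(z.1 : ℝ)|} with hS
  have hSinf : S.Infinite := by
    refine Set.Infinite.mono ?_ (hB.diff (box_finite Q0 (Q0 * (|θ| + 1))))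
    rintro ⟨q, p⟩ ⟨hmem, hnot⟩
    refine ⟨hmem, ?_⟩
    by_contra hlt
    push_neg at hlt
    apply hnot
    refine ⟨le_of_lt hlt, ?_⟩
    obtain ⟨hq0, happ⟩ := hmem
    have hq1 : (1:ℝ) ≤ |(q:ℝ)| := one_le_abs_cast hq0
    have h2 : |(q:ℝ)| ^ (-γ) ≤ 1 :=
      Real.rpow_le_one_of_one_le_of_nonpos hq1 (by linarith)
    have h3 : |θ - (p:ℝ)/(q:ℝ)| ≤ 1 := happ.trans h2
    have h4 : |(p:ℝ)/(q:ℝ)| ≤ |θ| + 1 := by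
      have h5 := abs_sub_abs_le_abs_sub ((p:ℝ)/(q:ℝ)) θ
      rw [abs_sub_comm] at h3
      linarith
    have hqne : (q:ℝ) ≠ 0 := by exact_mod_cast hq0
    calc |(p:ℝ)| = |(p:ℝ)/(q:ℝ)| * |(q:ℝ)| := by rw [← abs_mul]; congr 1; field_simp
    _ ≤ (|θ| + 1) * Q0 :=
        mul_le_mul h4 (le_of_lt hlt) (abs_nonneg _) (by positivity)
    _ = Q0 * (|θ| + 1) := by ring
  refine Set.Infinite.mono ?_ (hSinf.image ((Fmap_inj θ θ' hne).injOn))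
  rintro x ⟨⟨q, p⟩, ⟨⟨hq0, happ⟩, hQq⟩, rfl⟩
  refine ⟨⟨(q, p), rfl⟩, ?_⟩
  rw [Pibar_le_iff, show -(2*(γ/2 - 1 - δ)) = e by rw [he]; ring]
  rw [Fmap_zero, Fmap_one]
  set qa := |(q:ℝ)| with hqa
  set a := (q:ℝ) * θ - (p:ℝ) with hadef
  set b := (q:ℝ) * θ' - (p:ℝ) with hbdef
  set M := ‖Fmap θ θ' (q, p)‖ with hMdef
  have hq1 : (1:ℝ) ≤ qa := one_le_abs_cast hq0
  have hqpos : (0:ℝ) < qa := lt_of_lt_of_le one_pos hq1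
  have hqne : (q:ℝ) ≠ 0 := by exact_mod_cast hq0
  have hQ01 : (1:ℝ) ≤ Q0 := le_trans (le_max_left 1 (2/c)) (le_max_left _ _)
  have hM : M = max |a| |b| := norm_two _
  have ha1 : |a| = qa * |θ - (p:ℝ)/(q:ℝ)| := by
    rw [hqa, ← abs_mul]; congr 1; field_simp; rw [hadef]
  have ha2 : |a| ≤ qa ^ (1 - γ) := by
    rw [ha1, show (1:ℝ) - γ = 1 + -γ by ring, Real.rpow_add hqpos, Real.rpow_one]
    exact mul_le_mul_of_nonneg_left happ (le_of_lt hqpos)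
  have ha3 : |a| ≤ 1 :=
    ha2.trans (Real.rpow_le_one_of_one_le_of_nonpos hq1 (by linarith))
  have hbeq : b = (q:ℝ) * (θ' - θ) + a := by rw [hadef, hbdef]; ring
  have habs : |(q:ℝ) * (θ' - θ)| = c * qa := by rw [abs_mul, hc, hqa]; ring
  have hbub : |b| ≤ (c+1) * qa := by
    have h6 : |b| ≤ |(q:ℝ) * (θ' - θ)| + |a| := hbeq ▸ abs_add_le _ _
    rw [habs] at h6
    nlinarith
  have hblb : c * qa - 1 ≤ |b| := by
    have h6 := abs_sub_abs_le_abs_sub ((q:ℝ) * (θ' - θ)) (-a)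
    rw [sub_neg_eq_add, ← hbeq, habs, abs_neg] at h6
    linarith
  have hq2c : 2/c ≤ qa := le_trans (le_trans (le_max_right 1 (2/c)) (le_max_left _ _)) hQq
  have hcq2 : (1:ℝ) ≤ c * qa / 2 := by
    have := mul_le_mul_of_nonneg_left hq2c (le_of_lt hc0)
    rw [show c * (2/c) = 2 by field_simp] at this
    linarith
  have hMub : M ≤ (c+1) * qa := by
    rw [hM]
    exact max_le (ha3.trans (by nlinarith)) hbub
  have hMlb : c/2 * qa ≤ M := by
    rw [hM]
    exact le_trans (by linarith) (le_max_right |a| |b|)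
  have hMpos : (0:ℝ) < M := lt_of_lt_of_le (by positivity) hMlb
  have hq2δ : K ≤ qa ^ (2*δ) := by
    have h1 : K ^ (2*δ)⁻¹ ≤ qa := le_trans (le_max_right _ _) hQq
    have h2 := Real.rpow_le_rpow (by positivity) h1 (by positivity : (0:ℝ) ≤ 2*δ)
    rwa [Real.rpow_inv_rpow hK0.le (by positivity)] at h2
  have hLHS : |a| * |b| ≤ (c+1) * qa ^ (2 - γ) := by
    have h1 : |a| * |b| ≤ qa ^ (1-γ) * ((c+1) * qa) :=
      mul_le_mul ha2 hbub (abs_nonneg _) (Real.rpow_nonneg hqpos.le _)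
    have h2 : qa ^ (1-γ) * qa = qa ^ (2-γ) := by
      rw [show (2:ℝ) - γ = (1-γ) + 1 by ring, Real.rpow_add hqpos, Real.rpow_one]
    calc |a| * |b| ≤ qa ^ (1-γ) * ((c+1) * qa) := h1
    _ = (c+1) * (qa ^ (1-γ) * qa) := by ring
    _ = (c+1) * qa ^ (2-γ) := by rw [h2]
  have hfinish : ∀ B : ℝ, 0 < B → (c+1) * B ^ (-e) ≤ K → B ^ e * qa ^ e ≤ M ^ e →
      |a| * |b| ≤ M ^ e := by
    intro B hB0 hKB hBM
    have h5 : (c+1) * B ^ (-e) ≤ qa ^ (2*δ) := hKB.trans hq2δ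
    have hBe : (0:ℝ) < B ^ e := Real.rpow_pos_of_pos hB0 e
    rw [Real.rpow_neg hB0.le, ← div_eq_mul_inv, div_le_iff₀ hBe] at h5
    have h4 : (c+1) ≤ B ^ e * qa ^ (2*δ) := by nlinarith
    have h3 : qa ^ e = qa ^ (2-γ) * qa ^ (2*δ) := by
      rw [← Real.rpow_add hqpos, he]; ring_nf
    calc |a| * |b| ≤ (c+1) * qa ^ (2-γ) := hLHS
    _ ≤ (B ^ e * qa ^ (2*δ)) * qa ^ (2-γ) :=
        mul_le_mul_of_nonneg_right h4 (Real.rpow_nonneg hqpos.le _)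
    _ = B ^ e * qa ^ e := by rw [h3]; ring
    _ ≤ M ^ e := hBM
  rcases le_or_gt 0 e with he0 | he0
  · refine hfinish (c/2) (by positivity) (by nlinarith [Real.rpow_pos_of_pos (by positivity : (0:ℝ) < c+1) (-e)]) ?_
    have h1 : (c/2 * qa) ^ e ≤ M ^ e := Real.rpow_le_rpow (by positivity) hMlb he0
    rwa [Real.mul_rpow (by positivity) hqpos.le] at h1
  · refine hfinish (c+1) (by positivity) (by nlinarith [Real.rpow_pos_of_pos (by positivity : (0:ℝ) < c/2) (-e)]) ?_
    have h1 : ((c+1) * qa) ^ e ≤ M ^ e := Real.rpow_le_rpow_of_nonpos hMpos hMub he0.le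
    rwa [Real.mul_rpow (by positivity) hqpos.le] at h1

def σmap (x : Fin 2 → ℝ) : Fin 2 → ℝ := ![x 1, x 0]

lemma σmap_inj : Function.Injective σmap := by
  intro x y hxy
  funext i
  have h0 : x 1 = y 1 := congrFun hxy 0
  have h1 : x 0 = y 0 := congrFun hxy 1
  fin_cases i <;> assumption

lemma σmap_norm (x : Fin 2 → ℝ) : ‖σmap x‖ = ‖x‖ := by
  rw [norm_two, norm_two, max_comm]; rfl

lemma σmap_Pibar (x : Fin 2 → ℝ) : Pibar 2 (σmap x) = Pibar 2 x := by
  simp only [Pibar, Fin.prod_univ_two]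
  rw [mul_comm]; rfl

lemma Aset_swap (θ₁ θ₂ γ : ℝ)
    (h : {x | x ∈ latticeTheta θ₂ θ₁ ∧ Pibar 2 x ≤ ‖x‖ ^ (-γ)}.Infinite) :
    {x | x ∈ latticeTheta θ₁ θ₂ ∧ Pibar 2 x ≤ ‖x‖ ^ (-γ)}.Infinite := by
  refine Set.Infinite.mono ?_ (h.image σmap_inj.injOn)
  rintro y ⟨x, ⟨⟨z, rfl⟩, hP⟩, rfl⟩
  constructor
  · exact ⟨z, by funext i; fin_cases i <;> rfl⟩
  · rwa [σmap_Pibar, σmap_norm]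

lemma bounded_p (θ₁ θ₂ γ : ℝ) (hγ : -(1/2) < γ) (q p : ℤ)
    (hz : Pibar 2 (Fmap θ₁ θ₂ (q,p)) ≤ ‖Fmap θ₁ θ₂ (q,p)‖ ^ (-γ))
    (Q : ℝ) (hq : |(q:ℝ)| ≤ Q) :
    |(p:ℝ)| ≤ 2*Q*(max |θ₁| |θ₂|) + 9 := by
  set T := max |θ₁| |θ₂| with hT
  have hT0 : 0 ≤ T := le_trans (abs_nonneg θ₁) (le_max_left _ _)
  have hQ0 : 0 ≤ Q := le_trans (abs_nonneg _) hq
  by_contra hp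
  push_neg at hp
  have hQT : Q * T ≤ |(p:ℝ)|/2 - 4 := by nlinarith
  set x := Fmap θ₁ θ₂ (q,p) with hx
  have hcomp : ∀ i : Fin 2, |(p:ℝ)|/2 ≤ |x i| ∧ |x i| ≤ 2*|(p:ℝ)| := by
    intro i
    have hθi : ∃ θ : ℝ, |θ| ≤ T ∧ x i = (q:ℝ)*θ - p := by
      fin_cases i
      · exact ⟨θ₁, le_max_left _ _, rfl⟩
      · exact ⟨θ₂, le_max_right _ _, rfl⟩
    obtain ⟨θ, hθT, hxi⟩ := hθi
    have hqθ : |(q:ℝ)*θ| ≤ Q*T := by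
      rw [abs_mul]
      exact mul_le_mul hq hθT (abs_nonneg _) hQ0
    have hlow : |(p:ℝ)| - |(q:ℝ)*θ| ≤ |x i| := by
      rw [hxi, abs_sub_comm]
      exact abs_sub_abs_le_abs_sub _ _
    have hhigh : |x i| ≤ |(q:ℝ)*θ| + |(p:ℝ)| := by
      rw [hxi, sub_eq_add_neg]
      exact (abs_add_le _ _).trans (by rw [abs_neg])
    constructor <;> nlinarith
  have hM : ‖x‖ = max |x 0| |x 1| := norm_two x
  have hMub : ‖x‖ ≤ 2*|(p:ℝ)| := by
    rw [hM]; exact max_le (hcomp 0).2 (hcomp 1).2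
  have hM1 : 1 ≤ ‖x‖ := by
    rw [hM]
    refine le_trans ?_ (le_max_left _ _)
    nlinarith [(hcomp 0).1]
  have hcond : |x 0| * |x 1| ≤ ‖x‖ ^ (-(2*γ)) := (Pibar_le_iff x γ).1 hz
  have h2 : ‖x‖ ^ (-(2*γ)) ≤ ‖x‖ ^ (1:ℝ) :=
    Real.rpow_le_rpow_of_exponent_le hM1 (by linarith)
  rw [Real.rpow_one] at h2
  have hprod : (|(p:ℝ)|/2) * (|(p:ℝ)|/2) ≤ |x 0| * |x 1| :=
    mul_le_mul (hcomp 0).1 (hcomp 1).1 (by positivity) (abs_nonneg _)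
  have hfin : |x 0| * |x 1| ≤ 2*|(p:ℝ)| := hcond.trans (h2.trans hMub)
  have h9 : (9:ℝ) < |(p:ℝ)| := by nlinarith
  have key : (9:ℝ) * |(p:ℝ)| < |(p:ℝ)| * |(p:ℝ)| :=
    mul_lt_mul_of_pos_right h9 (by linarith : (0:ℝ) < |(p:ℝ)|)
  nlinarith [hprod, hfin, key]

lemma upper_main (θ₁ θ₂ : ℝ) (hne : θ₁ ≠ θ₂) (γ δ : ℝ) (hγ : -(1/2) < γ) (hδ : 0 < δ)
    (hA : {x | x ∈ latticeTheta θ₁ θ₂ ∧ Pibar 2 x ≤ ‖x‖ ^ (-γ)}.Infinite) :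
    (Bset θ₁ (2*γ+2-δ)).Infinite ∨ (Bset θ₂ (2*γ+2-δ)).Infinite := by
  set c := |θ₁ - θ₂| with hc
  have hc0 : 0 < c := abs_pos.2 (sub_ne_zero.2 hne)
  set T := max |θ₁| |θ₂| with hT
  set K := (c/2) ^ (-(2*γ+1)) with hK
  have hK0 : 0 < K := Real.rpow_pos_of_pos (by positivity) _
  set Q1 : ℝ := max 1 (K ^ δ⁻¹) with hQ1
  set A := {x | x ∈ latticeTheta θ₁ θ₂ ∧ Pibar 2 x ≤ ‖x‖ ^ (-γ)} with hA'
  have hAr : A ⊆ Set.range (Fmap θ₁ θ₂) := by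
    rintro x ⟨⟨z, rfl⟩, _⟩
    exact ⟨z, rfl⟩
  have hZinf : (Fmap θ₁ θ₂ ⁻¹' A).Infinite := hA.preimage hAr
  set Z' := {z : ℤ × ℤ | z ∈ Fmap θ₁ θ₂ ⁻¹' A ∧ Q1 ≤ |(z.1:ℝ)|} with hZ'
  have hZ'inf : Z'.Infinite := by
    refine Set.Infinite.mono ?_ (hZinf.diff (box_finite Q1 (2*Q1*T+9)))
    rintro ⟨q,p⟩ ⟨hmem, hnot⟩
    refine ⟨hmem, ?_⟩
    by_contra hlt
    push_neg at hlt
    exact hnot ⟨hlt.le, bounded_p θ₁ θ₂ γ hγ q p hmem.2 Q1 hlt.le⟩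
  have key : ∀ z ∈ Z', z ∈ Bset θ₁ (2*γ+2-δ) ∪ Bset θ₂ (2*γ+2-δ) := by
    rintro ⟨q,p⟩ ⟨hmem, hQq⟩
    set x := Fmap θ₁ θ₂ (q,p) with hx
    have hq1 : (1:ℝ) ≤ |(q:ℝ)| := le_trans (le_max_left 1 _) hQq
    have hqaR : (0:ℝ) < |(q:ℝ)| := lt_of_lt_of_le one_pos hq1
    have hq0 : q ≠ 0 := by
      intro h0
      rw [h0] at hq1
      norm_num at hq1
    have hqne : (q:ℝ) ≠ 0 := by exact_mod_cast hq0
    have hcond : |x 0| * |x 1| ≤ ‖x‖ ^ (-(2*γ)) := (Pibar_le_iff x γ).1 hmem.2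
    have hM : ‖x‖ = max |x 0| |x 1| := norm_two x
    have hx01 : x 0 - x 1 = (q:ℝ)*(θ₁-θ₂) := by
      show ((q:ℝ)*θ₁ - p) - ((q:ℝ)*θ₂ - p) = (q:ℝ)*(θ₁-θ₂)
      ring
    have hclb : c * |(q:ℝ)| ≤ |x 0| + |x 1| := by
      have h1 : |x 0 - x 1| = c * |(q:ℝ)| := by
        rw [hx01, abs_mul]
        exact mul_comm _ _
      calc c * |(q:ℝ)| = |x 0 - x 1| := h1.symm
      _ ≤ |x 0| + |x 1| := abs_sub _ _
    have hMlb : c * |(q:ℝ)| / 2 ≤ ‖x‖ := by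
      rw [hM]
      have h0 : |x 0| ≤ max |x 0| |x 1| := le_max_left _ _
      have h1 : |x 1| ≤ max |x 0| |x 1| := le_max_right _ _
      linarith
    have hMpos : (0:ℝ) < ‖x‖ := lt_of_lt_of_le (by positivity) hMlb
    have hKq : K ≤ |(q:ℝ)| ^ δ := by
      have h1 : K ^ δ⁻¹ ≤ |(q:ℝ)| := le_trans (le_max_right _ _) hQq
      have h2 := Real.rpow_le_rpow (by positivity) h1 hδ.le
      rwa [Real.rpow_inv_rpow hK0.le hδ.ne'] at h2
    have main : ∀ (θ u : ℝ), u = (q:ℝ)*θ - p → |u| * ‖x‖ ≤ ‖x‖ ^ (-(2*γ)) →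
        (q,p) ∈ Bset θ (2*γ+2-δ) := by
      intro θ u hu hule
      refine ⟨hq0, ?_⟩
      have h1 : |u| ≤ ‖x‖ ^ (-(2*γ)-1) := by
        have h2 : |u| ≤ ‖x‖ ^ (-(2*γ)) / ‖x‖ := (le_div_iff₀ hMpos).2 hule
        rwa [show ‖x‖ ^ (-(2*γ)) / ‖x‖ = ‖x‖ ^ (-(2*γ)-1) from by
          rw [Real.rpow_sub hMpos, Real.rpow_one]] at h2
      have h2 : ‖x‖ ^ (-(2*γ)-1) ≤ (c/2 * |(q:ℝ)|) ^ (-(2*γ)-1) := by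
        refine Real.rpow_le_rpow_of_nonpos (by positivity) ?_ (by linarith)
        calc c/2 * |(q:ℝ)| = c * |(q:ℝ)| / 2 := by ring
        _ ≤ ‖x‖ := hMlb
      have h3 : (c/2 * |(q:ℝ)|) ^ (-(2*γ)-1) = K * |(q:ℝ)| ^ (-(2*γ+1)) := by
        rw [show -(2*γ)-1 = -(2*γ+1) by ring, Real.mul_rpow (by positivity) (abs_nonneg _), hK]
      have h4 : |θ - (p:ℝ)/(q:ℝ)| = |u| / |(q:ℝ)| := by
        rw [hu, eq_div_iff (ne_of_gt hqaR), ← abs_mul]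
        congr 1
        field_simp
      rw [h4, div_le_iff₀ hqaR]
      calc |u| ≤ K * |(q:ℝ)| ^ (-(2*γ+1)) := by rw [← h3]; exact h1.trans h2
      _ ≤ |(q:ℝ)| ^ δ * |(q:ℝ)| ^ (-(2*γ+1)) :=
          mul_le_mul_of_nonneg_right hKq (Real.rpow_nonneg (abs_nonneg _) _)
      _ = |(q:ℝ)| ^ (-(2*γ+2-δ)) * |(q:ℝ)| := by
          have h5 : |(q:ℝ)| ^ (-(2*γ+2-δ)) * |(q:ℝ)| = |(q:ℝ)| ^ (-(2*γ+2-δ)) * |(q:ℝ)| ^ (1:ℝ) := by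
            rw [Real.rpow_one]
          rw [h5, ← Real.rpow_add hqaR, ← Real.rpow_add hqaR]
          congr 1
          ring
    rcases le_total |x 0| |x 1| with hle | hle
    · left
      refine main θ₁ (x 0) rfl ?_
      have hnorm : ‖x‖ = |x 1| := by rw [hM]; exact max_eq_right hle
      calc |x 0| * ‖x‖ = |x 0| * |x 1| := by rw [hnorm]
      _ ≤ ‖x‖ ^ (-(2*γ)) := hcond
    · right
      refine main θ₂ (x 1) rfl ?_
      have hnorm : ‖x‖ = |x 0| := by rw [hM]; exact max_eq_left hle
      calc |x 1| * ‖x‖ = |x 1| * |x 0| := by rw [hnorm]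
      _ = |x 0| * |x 1| := by ring
      _ ≤ ‖x‖ ^ (-(2*γ)) := hcond
  have hsub : Z' ⊆ Bset θ₁ (2*γ+2-δ) ∪ Bset θ₂ (2*γ+2-δ) := key
  have := Set.Infinite.mono hsub hZ'inf
  simpa using Set.infinite_union.mp this

lemma EReal.le_of_forall_sub {b : ℝ} {a : EReal}
    (h : ∀ δ : ℝ, 0 < δ → ((b - δ : ℝ) : EReal) ≤ a) : (b : EReal) ≤ a := by
  by_contra hcon
  push_neg at hcon
  induction a using EReal.rec with
  | bot =>
      exact EReal.coe_ne_bot _ (le_bot_iff.1 (h 1 one_pos))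
  | coe r =>
      have hrb : r < b := by exact_mod_cast hcon
      have := h ((b - r)/2) (by linarith)
      have h2 : b - (b - r)/2 ≤ r := by exact_mod_cast this
      linarith
  | top => exact absurd hcon (by simp)

lemma ereal_forall_le_top {a : EReal} (h : ∀ r : ℝ, (r : EReal) ≤ a) : a = ⊤ := by
  induction a using EReal.rec with
  | bot => have := h 0; simp at this
  | coe r =>
      have := h (r + 1)
      have : r + 1 ≤ r := by exact_mod_cast this
      linarith
  | top => rfl

lemma ereal_cases (a : EReal) (ha : (1 : EReal) ≤ a) :
    a = ⊤ ∨ ∃ m : ℝ, a = (m : EReal) ∧ 1 ≤ m := by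
  induction a using EReal.rec with
  | bot =>
      rw [← EReal.coe_one] at ha
      exact absurd (le_bot_iff.1 ha) (EReal.coe_ne_bot 1)
  | coe r =>
      right
      refine ⟨r, rfl, ?_⟩
      exact_mod_cast ha
  | top => exact Or.inl rfl

lemma rhs_coe (m : ℝ) : ((1/2 : ℝ) : EReal) * (m : EReal) - 1 = ((m/2 - 1 : ℝ) : EReal) := by
  rw [← EReal.coe_mul, ← EReal.coe_one, ← EReal.coe_sub]
  congr 1
  ring

lemma top_arith : ((1/2 : ℝ) : EReal) * (⊤ : EReal) - 1 = ⊤ := by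
  rw [EReal.coe_mul_top_of_pos (by norm_num), ← EReal.coe_one, EReal.top_sub_coe]

lemma mu_ge_one (θ : ℝ) : (1 : EReal) ≤ irrMeasure θ :=
  le_sSup ⟨1, by norm_cast, Bset_one_infinite θ⟩

/-- For distinct reals `θ₁, θ₂`:
`ω(Λ_{θ₁,θ₂}) = (1/2)·max(μ(θ₁), μ(θ₂)) − 1` (in the extended reals). -/
theorem stmt_6 (θ₁ θ₂ : ℝ) (h : θ₁ ≠ θ₂) :
    dioExp 2 (latticeTheta θ₁ θ₂) =
      ((1 / 2 : ℝ) : EReal) * max (irrMeasure θ₁) (irrMeasure θ₂) - 1 := by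
  have hswap : θ₂ ≠ θ₁ := h.symm
  have hDrfl : dioExp 2 (latticeTheta θ₁ θ₂) = sSup {g : EReal | ∃ γ : ℝ, g = (γ : EReal) ∧
      {x : Fin 2 → ℝ | x ∈ latticeTheta θ₁ θ₂ ∧ Pibar 2 x ≤ ‖x‖ ^ (-γ)}.Infinite} := rfl
  have hirr : ∀ θ : ℝ, irrMeasure θ = sSup {g : EReal | ∃ γ : ℝ, g = (γ : EReal) ∧
      (Bset θ γ).Infinite} := fun θ => rfl
  have hμ1 : (1 : EReal) ≤ max (irrMeasure θ₁) (irrMeasure θ₂) :=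
    le_trans (mu_ge_one θ₁) (le_max_left _ _)
  have hBtoA : ∀ γ δ : ℝ, 1 ≤ γ → 0 < δ →
      ((Bset θ₁ γ).Infinite ∨ (Bset θ₂ γ).Infinite) →
      ((γ/2 - 1 - δ : ℝ) : EReal) ≤ dioExp 2 (latticeTheta θ₁ θ₂) := by
    intro γ δ hγ hδ hB
    have hinf : {x | x ∈ latticeTheta θ₁ θ₂ ∧ Pibar 2 x ≤ ‖x‖ ^ (-(γ/2 - 1 - δ))}.Infinite := by
      rcases hB with hB | hB
      · exact lower_main θ₁ θ₂ h γ δ hγ hδ hB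
      · exact Aset_swap θ₁ θ₂ _ (lower_main θ₂ θ₁ hswap γ δ hγ hδ hB)
    rw [hDrfl]
    exact le_sSup ⟨γ/2 - 1 - δ, rfl, hinf⟩
  have hgetB : ∀ r : ℝ, (r : EReal) < max (irrMeasure θ₁) (irrMeasure θ₂) → ∃ γ : ℝ, r < γ ∧ 1 ≤ γ ∧
      ((Bset θ₁ γ).Infinite ∨ (Bset θ₂ γ).Infinite) := by
    intro r hr
    have hcase : (r : EReal) < irrMeasure θ₁ ∨ (r : EReal) < irrMeasure θ₂ :=
      lt_max_iff.1 hr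
    have main : ∀ θ : ℝ, (r : EReal) < irrMeasure θ → ∃ γ : ℝ, r < γ ∧ 1 ≤ γ ∧
        (Bset θ γ).Infinite := by
      intro θ hθ
      rw [hirr θ] at hθ
      obtain ⟨g, hg, hrg⟩ := lt_sSup_iff.1 hθ
      obtain ⟨γ, rfl, hinf⟩ := hg
      have hrγ : r < γ := by exact_mod_cast hrg
      refine ⟨max γ 1, lt_of_lt_of_le hrγ (le_max_left _ _), le_max_right _ _, ?_⟩
      rcases le_total γ 1 with h1 | h1
      · rw [max_eq_right h1]; exact Bset_one_infinite θ
      · rw [max_eq_left h1]; exact hinf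
    rcases hcase with h' | h'
    · obtain ⟨γ, h1, h2, h3⟩ := main θ₁ h'
      exact ⟨γ, h1, h2, Or.inl h3⟩
    · obtain ⟨γ, h1, h2, h3⟩ := main θ₂ h'
      exact ⟨γ, h1, h2, Or.inr h3⟩
  have hDle : dioExp 2 (latticeTheta θ₁ θ₂) ≤
      ((1/2 : ℝ) : EReal) * max (irrMeasure θ₁) (irrMeasure θ₂) - 1 := by
    rw [hDrfl]
    apply sSup_le
    rintro g ⟨γ, rfl, hinf⟩
    have hμγ : γ ≤ -(1/2) ∨ ((2*γ+2 : ℝ) : EReal) ≤ max (irrMeasure θ₁) (irrMeasure θ₂) := by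
      rcases le_or_gt γ (-(1/2)) with h' | h'
      · exact Or.inl h'
      · right
        apply EReal.le_of_forall_sub
        intro δ hδ
        rcases upper_main θ₁ θ₂ h γ δ h' hδ hinf with hB | hB
        · exact le_trans (le_sSup ⟨2*γ+2-δ, rfl, hB⟩ :
            ((2*γ+2-δ:ℝ):EReal) ≤ irrMeasure θ₁) (le_max_left _ _)
        · exact le_trans (le_sSup ⟨2*γ+2-δ, rfl, hB⟩ :
            ((2*γ+2-δ:ℝ):EReal) ≤ irrMeasure θ₂) (le_max_right _ _)
    rcases ereal_cases _ hμ1 with hTop | ⟨m, hm, hm1⟩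
    · rw [hTop, top_arith]
      exact le_top
    · rw [hm, rhs_coe m]
      rcases hμγ with h' | h'
      · exact_mod_cast (by linarith : γ ≤ m/2 - 1)
      · rw [hm] at h'
        have h2 : 2*γ+2 ≤ m := by exact_mod_cast h'
        exact_mod_cast (by linarith : γ ≤ m/2 - 1)
  have hleD : ((1/2 : ℝ) : EReal) * max (irrMeasure θ₁) (irrMeasure θ₂) - 1 ≤
      dioExp 2 (latticeTheta θ₁ θ₂) := by
    rcases ereal_cases _ hμ1 with hTop | ⟨m, hm, hm1⟩
    · rw [hTop, top_arith]
      refine le_of_eq (ereal_forall_le_top (fun r => ?_)).symm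
      obtain ⟨γ, hrγ, hγ1, hB⟩ := hgetB (max r (2*r+4))
        (by rw [hTop]; exact EReal.coe_lt_top _)
      refine le_trans ?_ (hBtoA γ 1 hγ1 one_pos hB)
      have h2 : 2*r + 4 < γ := lt_of_le_of_lt (le_max_right _ _) hrγ
      exact_mod_cast (by linarith : r ≤ γ/2 - 1 - 1)
    · rw [hm, rhs_coe m]
      apply EReal.le_of_forall_sub
      intro δ hδ
      have hlt : ((m - δ/2 : ℝ) : EReal) < max (irrMeasure θ₁) (irrMeasure θ₂) := by
        rw [hm]
        exact_mod_cast (by linarith : m - δ/2 < m)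
      obtain ⟨γ, hrγ, hγ1, hB⟩ := hgetB (m - δ/2) hlt
      refine le_trans ?_ (hBtoA γ (δ/4) hγ1 (by linarith) hB)
      exact_mod_cast (by linarith : m/2 - 1 - δ ≤ γ/2 - 1 - δ/4)
  exact le_antisymm hDle hleD

end
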